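/- Let f : ℝ^d → ℝ be continuously differentiable with L-Lipschitz gradient, and let λ > L. Then the function y ↦ f(y) + (λ/2)‖y − x‖² has a unique minimizer y*, and this minimizer satisfies ‖y* − x‖ ≥ ‖∇f(x)‖ / (2λ). -/

import Mathlib

open scoped RealInnerProductSpace
open InnerProductSpace

variable {E : Type*} [NormedAddCommGroup E] [InnerProductSpace ℝ E] [CompleteSpace E]

lemma line_hasDerivAt {h : E → ℝ} {H : E → E} (hH : ∀ y, HasGradientAt h (H y) y)
    (a v : E) (t : ℝ) :
    HasDerivAt (fun s : ℝ => h (a + s • v)) ⟪H (a + t • v), v⟫ t := by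
  have hc : HasDerivAt (fun s : ℝ => a + s • v) v t := by
    simpa using ((hasDerivAt_id t).smul_const v).const_add a
  have hf : HasFDerivAt h (toDual ℝ E (H (a + t • v))) (a + t • v) := hH _
  have := hf.comp_hasDerivAt t hc
  exact this

lemma convexOn_of_monotone_gradient {h : E → ℝ} {H : E → E}
    (hH : ∀ y, HasGradientAt h (H y) y)
    (hmono : ∀ a b, 0 ≤ ⟪H b - H a, b - a⟫) : ConvexOn ℝ Set.univ h := by
  refine ⟨convex_univ, fun a _ b _ ta tb hta htb hab => ?_⟩
  set v := b - a with hv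
  have key : ∀ t : ℝ, HasDerivAt (fun s : ℝ => h (a + s • v)) ⟪H (a + t • v), v⟫ t :=
    line_hasDerivAt hH a v
  have hdiff : Differentiable ℝ (fun s : ℝ => h (a + s • v)) := fun t => (key t).differentiableAt
  have hderiv : deriv (fun s : ℝ => h (a + s • v)) = fun t => ⟪H (a + t • v), v⟫ :=
    funext fun t => (key t).deriv
  have hmono' : Monotone (deriv (fun s : ℝ => h (a + s • v))) := by
    rw [hderiv]
    intro s t hst
    rcases eq_or_lt_of_le hst with rfl | hst
    · exact le_refl _
    · have h0 := hmono (a + s • v) (a + t • v)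
      have hd : (a + t • v) - (a + s • v) = (t - s) • v := by module
      rw [hd, real_inner_smul_right, inner_sub_left] at h0
      nlinarith
  have hconv := hmono'.convexOn_univ_of_deriv hdiff
  have h01 := hconv.2 (Set.mem_univ (0:ℝ)) (Set.mem_univ (1:ℝ)) hta htb hab
  simp only [smul_eq_mul, mul_zero, mul_one, zero_add] at h01
  have hpt : a + tb • v = ta • a + tb • b := by
    have : ta = 1 - tb := by linarith
    rw [this, hv]; module
  rw [hpt] at h01
  rw [show a + (0:ℝ) • v = a by module, show a + (1:ℝ) • v = b by rw [hv]; module] at h01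
  simpa using h01

lemma first_order_lower {h : E → ℝ} {H : E → E}
    (hH : ∀ y, HasGradientAt h (H y) y)
    (hmono : ∀ a b, 0 ≤ ⟪H b - H a, b - a⟫) (a b : E) :
    h a + ⟪H a, b - a⟫ ≤ h b := by
  set v := b - a with hv
  have key : ∀ t : ℝ, HasDerivAt (fun s : ℝ => h (a + s • v)) ⟪H (a + t • v), v⟫ t :=
    line_hasDerivAt hH a v
  obtain ⟨c, hc, hceq⟩ := exists_hasDerivAt_eq_slope (fun s : ℝ => h (a + s • v))
    (fun t => ⟪H (a + t • v), v⟫) one_pos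
    (fun t _ => ((key t).continuousAt).continuousWithinAt) (fun t _ => key t)
  have h0 := hmono a (a + c • v)
  have hd : (a + c • v) - a = c • v := by module
  rw [hd, real_inner_smul_right, inner_sub_left] at h0
  have hc0 : 0 < c := hc.1
  have hle : ⟪H a, v⟫ ≤ ⟪H (a + c • v), v⟫ := by nlinarith
  have he0 : a + (0:ℝ) • v = a := by module
  have he1 : a + (1:ℝ) • v = b := by rw [hv]; module
  rw [he0, he1] at hceq
  simp at hceq
  linarith [hceq ▸ hle]

lemma hasGradientAt_quad (c : ℝ) (x y : E) :
    HasGradientAt (fun z => c / 2 * ‖z - x‖ ^ 2) (c • (y - x)) y := by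
  have hsub : HasFDerivAt (fun z : E => z - x) (ContinuousLinearMap.id ℝ E) y :=
    (hasFDerivAt_id y).sub_const x
  have hinner := (hsub.inner ℝ hsub).const_mul (c / 2)
  have heq : (fun z : E => c / 2 * ‖z - x‖ ^ 2) = fun z => c / 2 * ⟪z - x, z - x⟫ := by
    funext z; rw [real_inner_self_eq_norm_sq]
  rw [hasGradientAt_iff_hasFDerivAt, heq]
  convert hinner using 1
  · rfl
  ext w
  simp [fderivInnerCLM_apply, toDual_apply_apply, real_inner_comm, inner_smul_left]
  rw [real_inner_comm (y - x) w, inner_sub_left]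
  ring

theorem unique_minimizer_dist_lower_bound {d : ℕ}
    (f : EuclideanSpace ℝ (Fin d) → ℝ)
    (G : EuclideanSpace ℝ (Fin d) → EuclideanSpace ℝ (Fin d))
    (hG : ∀ y, HasGradientAt f (G y) y)
    (L lam : ℝ) (hL0 : 0 ≤ L)
    (hLip : ∀ x y, ‖G y - G x‖ ≤ L * ‖y - x‖)
    (hlam : L < lam) (x : EuclideanSpace ℝ (Fin d)) :
    ∃ ystar : EuclideanSpace ℝ (Fin d),
      (∀ z, f ystar + lam / 2 * ‖ystar - x‖ ^ 2 ≤ f z + lam / 2 * ‖z - x‖ ^ 2) ∧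
      (∀ y', (∀ z, f y' + lam / 2 * ‖y' - x‖ ^ 2 ≤ f z + lam / 2 * ‖z - x‖ ^ 2) → y' = ystar) ∧
      ‖G x‖ / (2 * lam) ≤ ‖ystar - x‖ := by
  have hlam0 : 0 < lam := lt_of_le_of_lt hL0 hlam
  obtain ⟨g, hg⟩ : ∃ g : EuclideanSpace ℝ (Fin d) → ℝ, g = fun y => f y + lam / 2 * ‖y - x‖ ^ 2 := ⟨_, rfl⟩
  obtain ⟨Gg, hGgdef⟩ : ∃ Gg : EuclideanSpace ℝ (Fin d) → EuclideanSpace ℝ (Fin d),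
      Gg = fun y => G y + lam • (y - x) := ⟨_, rfl⟩
  obtain ⟨m, hm⟩ : ∃ m : ℝ, m = lam - L := ⟨_, rfl⟩
  have hm0 : 0 < m := by simp only [hm]; linarith
  have hGgrad : ∀ y, HasGradientAt g (Gg y) y := by
    intro y
    have h1 : HasFDerivAt f (toDual ℝ _ (G y)) y := hG y
    have h2 : HasFDerivAt (fun z : EuclideanSpace ℝ (Fin d) => lam / 2 * ‖z - x‖ ^ 2)
        (toDual ℝ _ (lam • (y - x))) y := hasGradientAt_quad lam x y
    have h3 := h1.add h2
    rw [hasGradientAt_iff_hasFDerivAt]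
    simp only [hGgdef, map_add]
    rw [hg]
    exact h3
  -- h := g minus strong convexity part
  obtain ⟨h, hh⟩ : ∃ h : EuclideanSpace ℝ (Fin d) → ℝ, h = fun y => g y - m / 2 * ‖y‖ ^ 2 := ⟨_, rfl⟩
  obtain ⟨H, hH⟩ : ∃ H : EuclideanSpace ℝ (Fin d) → EuclideanSpace ℝ (Fin d),
      H = fun y => Gg y - m • y := ⟨_, rfl⟩
  have hHgrad : ∀ y, HasGradientAt h (H y) y := by
    intro y
    have h2 : HasFDerivAt (fun z : EuclideanSpace ℝ (Fin d) => m / 2 * ‖z - 0‖ ^ 2)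
        (toDual ℝ _ (m • (y - 0))) y := hasGradientAt_quad m 0 y
    simp only [sub_zero] at h2
    have h3 := (hGgrad y : HasFDerivAt g (toDual ℝ _ (Gg y)) y).sub h2
    rw [hasGradientAt_iff_hasFDerivAt]
    simp only [hH, map_sub]
    rw [hh]
    exact h3
  have hstrong : ∀ a b, m * ‖b - a‖ ^ 2 ≤ ⟪Gg b - Gg a, b - a⟫ := by
    intro a b
    have hd : Gg b - Gg a = (G b - G a) + lam • (b - a) := by simp only [hGgdef]; module
    rw [hd, inner_add_left, real_inner_smul_left, real_inner_self_eq_norm_sq]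
    have hcs : |⟪G b - G a, b - a⟫| ≤ ‖G b - G a‖ * ‖b - a‖ := abs_real_inner_le_norm _ _
    have hlip := hLip a b
    have hn : (0:ℝ) ≤ ‖b - a‖ := norm_nonneg _
    have h1 : -(L * ‖b - a‖ * ‖b - a‖) ≤ ⟪G b - G a, b - a⟫ := by
      nlinarith [neg_abs_le ⟪G b - G a, b - a⟫]
    have hsq : ‖b - a‖ * ‖b - a‖ = ‖b - a‖ ^ 2 := (sq ‖b - a‖).symm
    simp only [hm]
    nlinarith [h1, hsq]
  have hHmono : ∀ a b, 0 ≤ ⟪H b - H a, b - a⟫ := by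
    intro a b
    have hd : H b - H a = (Gg b - Gg a) - m • (b - a) := by simp only [hH]; module
    rw [hd, inner_sub_left, real_inner_smul_left, real_inner_self_eq_norm_sq]
    linarith [hstrong a b]
  have hconv : ConvexOn ℝ Set.univ h := convexOn_of_monotone_gradient hHgrad hHmono
  -- first-order lower bound for g
  have gfo : ∀ z, g x + ⟪Gg x, z - x⟫ + m / 2 * ‖z - x‖ ^ 2 ≤ g z := by
    intro z
    have h1 := first_order_lower hHgrad hHmono x z
    simp only [hh, hH] at h1
    rw [inner_sub_left, real_inner_smul_left] at h1
    have hexp : ‖z‖ ^ 2 = ‖x‖ ^ 2 + 2 * ⟪x, z - x⟫ + ‖z - x‖ ^ 2 := by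
      have hns := norm_add_sq_real x (z - x)
      rw [show x + (z - x) = z from by module] at hns
      linarith [hns]
    have hexp2 : m / 2 * ‖z‖ ^ 2 = m / 2 * ‖x‖ ^ 2 + m * ⟪x, z - x⟫ + m / 2 * ‖z - x‖ ^ 2 := by
      rw [hexp]; ring
    linarith
  -- existence of minimizer on a big ball
  have hfc : Continuous f := by
    have : Differentiable ℝ f := fun y => (hG y).differentiableAt
    exact this.continuous
  have hcont : Continuous g := by
    rw [hg]
    apply hfc.add
    exact continuous_const.mul (((continuous_id.sub continuous_const).norm).pow 2)
  obtain ⟨C, hC⟩ : ∃ C : ℝ, C = ‖Gg x‖ := ⟨_, rfl⟩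
  have hC0 : (0:ℝ) ≤ C := hC ▸ norm_nonneg _
  obtain ⟨R, hR⟩ : ∃ R : ℝ, R = 2 * C / m + 1 := ⟨_, rfl⟩
  have hR0 : 0 < R := by rw [hR]; positivity
  have hxmem : x ∈ Metric.closedBall x R := by simp [hR0.le]
  obtain ⟨ystar, hymem, hymin⟩ := (isCompact_closedBall x R).exists_isMinOn ⟨x, hxmem⟩
    hcont.continuousOn
  have hglobal : ∀ z, g ystar ≤ g z := by
    intro z
    by_cases hz : z ∈ Metric.closedBall x R
    · exact hymin hz
    · have hr : R < ‖z - x‖ := by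
        simp only [Metric.mem_closedBall, dist_eq_norm, not_le] at hz
        exact hz
      have h1 := gfo z
      have h2 : -(C * ‖z - x‖) ≤ ⟪Gg x, z - x⟫ := by
        rw [hC]
        have := abs_real_inner_le_norm (Gg x) (z - x)
        have := neg_abs_le ⟪Gg x, z - x⟫
        linarith
      have hgx : g ystar ≤ g x := hymin hxmem
      have hrpos : 0 < ‖z - x‖ := lt_trans hR0 hr
      have hkey : 0 ≤ m / 2 * ‖z - x‖ ^ 2 - C * ‖z - x‖ := by
        have h3 : 2 * C / m < ‖z - x‖ := by
          simp only [hR] at hr; linarith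
        have h4 : 2 * C < m * ‖z - x‖ := by
          rw [div_lt_iff₀ hm0] at h3; linarith
        have h5 := mul_le_mul_of_nonneg_left h4.le
          (le_of_lt (by positivity : (0:ℝ) < ‖z - x‖ / 2))
        nlinarith [h5]
      linarith [h1, h2, hgx, hkey]
  -- minimizer in f-form
  have hglobalf : ∀ z, f ystar + lam / 2 * ‖ystar - x‖ ^ 2 ≤ f z + lam / 2 * ‖z - x‖ ^ 2 := by
    intro z; have := hglobal z; simpa only [hg] using this
  -- uniqueness via strict convexity
  have hstrongconv : StrongConvexOn Set.univ m g := by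
    rw [strongConvexOn_iff_convex, ← hh]
    exact hconv
  have huniq : ∀ y', (∀ z, f y' + lam / 2 * ‖y' - x‖ ^ 2 ≤ f z + lam / 2 * ‖z - x‖ ^ 2) →
      y' = ystar := by
    intro y' hy'f
    have hy' : ∀ z, g y' ≤ g z := by intro z; simpa only [hg] using hy'f z
    by_contra hne
    have hstrict := hstrongconv.strictConvexOn hm0
    have hmid := hstrict.2 (Set.mem_univ y') (Set.mem_univ ystar) hne
      (by norm_num : (0:ℝ) < 1/2) (by norm_num : (0:ℝ) < 1/2) (by norm_num)
    have h1 : g ystar ≤ g ((1/2:ℝ) • y' + (1/2:ℝ) • ystar) := hglobal _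
    have h2 : g y' = g ystar := le_antisymm (hy' ystar) (hglobal y')
    rw [h2] at hmid
    simp only [smul_eq_mul] at hmid
    linarith
  -- gradient vanishes at the minimizer
  have hloc : IsLocalMin g ystar := Filter.Eventually.of_forall hglobal
  have hzero : toDual ℝ (EuclideanSpace ℝ (Fin d)) (Gg ystar) = 0 :=
    hloc.hasFDerivAt_eq_zero (hGgrad ystar)
  have hGg0 : Gg ystar = 0 := by
    have := (toDual ℝ (EuclideanSpace ℝ (Fin d))).map_eq_zero_iff.mp hzero
    exact this
  have hGy : G ystar = -(lam • (ystar - x)) := by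
    have h0 : G ystar + lam • (ystar - x) = 0 := by
      simpa only [hGgdef] using hGg0
    exact eq_neg_of_add_eq_zero_left h0
  have hnorm : ‖G ystar‖ = lam * ‖ystar - x‖ := by
    rw [hGy, norm_neg, norm_smul, Real.norm_of_nonneg hlam0.le]
  have hbound : ‖G x‖ ≤ 2 * lam * ‖ystar - x‖ := by
    have h1 : ‖G x‖ ≤ ‖G x - G ystar‖ + ‖G ystar‖ := by
      calc ‖G x‖ = ‖(G x - G ystar) + G ystar‖ := by rw [sub_add_cancel]
        _ ≤ _ := norm_add_le _ _
    have h2 := hLip ystar x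
    have h3 : ‖x - ystar‖ = ‖ystar - x‖ := norm_sub_rev _ _
    have h4 : L * ‖ystar - x‖ ≤ lam * ‖ystar - x‖ :=
      mul_le_mul_of_nonneg_right hlam.le (norm_nonneg _)
    rw [hnorm] at h1
    rw [h3] at h2
    linarith
  refine ⟨ystar, hglobalf, huniq, ?_⟩
  rw [div_le_iff₀ (by positivity)]
  linarith
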